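/- Let G = (V, E) be a cactus graph with |G| ≥ 5. Then the vertices of G can be ordered v_1, v_2, …, v_n so that v_1 v_2 v_3 is a path in G and, for every m ≥ 4, the vertex v_m is adjacent in G to at most two of the prior vertices v_1, …, v_{m−1}. Equivalently, the complement Ḡ can be constructed by starting with an induced subgraph on three vertices and adding one vertex at a time so that the newest vertex is adjacent in Ḡ to all but at most two of the prior vertices. -/

import Mathlib

/-- A cactus graph: a simple connected graph in which every edge belongs to at
most one cycle, i.e. any two cycles sharing a common edge have the same edge set. -/
def IsCactus {n : ℕ} (G : SimpleGraph (Fin n)) : Prop :=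
  G.Connected ∧
    ∀ (u w : Fin n) (p : G.Walk u u) (q : G.Walk w w), p.IsCycle → q.IsCycle →
      ∀ e ∈ p.edges, e ∈ q.edges → ∀ e', (e' ∈ p.edges ↔ e' ∈ q.edges)

/-- `G` on `n ≥ 5` vertices is constructed, with respect to the vertex ordering
`v 0, v 1, …, v (n-1)`, from the path `v 0 - v 1 - v 2` by adding one vertex at a
time so that each newly added vertex `v i` (for `i ≥ 3`, i.e. `m = i + 1 ≥ 4`
one-indexed) is adjacent in `G` to at most two of the prior vertices.
Equivalently, the complement `Ḡ` is constructed by adding one vertex at a time,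
the newest vertex being adjacent in `Ḡ` to all but at most two prior vertices. -/
def ConstructedFromPathOrder {n : ℕ} (hn : 5 ≤ n) (G : SimpleGraph (Fin n))
    [DecidableRel G.Adj] (v : Equiv.Perm (Fin n)) : Prop :=
  G.Adj (v ⟨0, by omega⟩) (v ⟨1, by omega⟩) ∧
  G.Adj (v ⟨1, by omega⟩) (v ⟨2, by omega⟩) ∧
  ∀ i : Fin n, 3 ≤ (i : ℕ) →
    (Finset.univ.filter (fun j : Fin n => j < i ∧ G.Adj (v i) (v j))).card ≤ 2

open SimpleGraph

section Aux
variable {n : ℕ} {G : SimpleGraph (Fin n)} [DecidableRel G.Adj]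


lemma concat_isPath {n : ℕ} {G : SimpleGraph (Fin n)} {u v w : Fin n}
    {p : G.Walk u v} (hp : p.IsPath) (h : G.Adj v w) (hw : w ∉ p.support) :
    (p.concat h).IsPath := by
  have : (p.concat h) = (Walk.cons h.symm p.reverse).reverse := by
    rw [Walk.reverse_cons, Walk.reverse_reverse, Walk.concat_eq_append]
  rw [this]
  exact (hp.reverse.cons (by simpa using hw)).reverse

lemma cactus_no_three {n : ℕ} {G : SimpleGraph (Fin n)}
    (hG2 : ∀ (a b : Fin n) (p : G.Walk a a) (q : G.Walk b b), p.IsCycle → q.IsCycle →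
      ∀ e ∈ p.edges, e ∈ q.edges → ∀ e', (e' ∈ p.edges ↔ e' ∈ q.edges))
    {x u v w : Fin n} (huv : u ≠ v) (huw : u ≠ w) (hvw : v ≠ w)
    (hxu : G.Adj x u) (hxv : G.Adj x v) (hxw : G.Adj x w)
    (p : G.Walk u v) (hp : x ∉ p.support)
    (q : G.Walk u w) (hq : x ∉ q.support) : False := by
  classical
  -- convert to paths
  obtain ⟨pp, hpp⟩ : ∃ pp : G.Walk u v, pp.IsPath ∧ x ∉ pp.support :=
    ⟨p.toPath, p.toPath.2, fun hx => hp (p.support_toPath_subset hx)⟩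
  obtain ⟨hppath, hpx⟩ := hpp
  obtain ⟨qq, hqq⟩ : ∃ qq : G.Walk u w, qq.IsPath ∧ x ∉ qq.support :=
    ⟨q.toPath, q.toPath.2, fun hx => hq (q.support_toPath_subset hx)⟩
  obtain ⟨hqpath, hqx⟩ := hqq
  have hxv' : v ≠ x := fun h => hpx (h ▸ pp.end_mem_support)
  have hxw' : w ≠ x := fun h => hqx (h ▸ qq.end_mem_support)
  let c1 : G.Walk x x := Walk.cons hxu (pp.concat hxv.symm)
  let c2 : G.Walk x x := Walk.cons hxu (qq.concat hxw.symm)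
  have hc1 : c1.IsCycle := by
    rw [Walk.cons_isCycle_iff]
    refine ⟨concat_isPath hppath hxv.symm hpx, ?_⟩
    rw [Walk.edges_concat, List.concat_eq_append, List.mem_append]
    rintro (h | h)
    · exact hpx (pp.fst_mem_support_of_mem_edges h)
    · simp only [List.mem_singleton, Sym2.eq_iff] at h
      rcases h with ⟨h1, h2⟩ | ⟨h1, h2⟩ <;> simp_all
  have hc2 : c2.IsCycle := by
    rw [Walk.cons_isCycle_iff]
    refine ⟨concat_isPath hqpath hxw.symm hqx, ?_⟩
    rw [Walk.edges_concat, List.concat_eq_append, List.mem_append]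
    rintro (h | h)
    · exact hqx (qq.fst_mem_support_of_mem_edges h)
    · simp only [List.mem_singleton, Sym2.eq_iff] at h
      rcases h with ⟨h1, h2⟩ | ⟨h1, h2⟩ <;> simp_all
  have hmem1 : s(x, u) ∈ c1.edges := by simp [c1]
  have hmem2 : s(x, u) ∈ c2.edges := by simp [c2]
  have key := hG2 x x c1 c2 hc1 hc2 (s(x, u)) hmem1 hmem2 (s(v, x))
  have hin1 : s(v, x) ∈ c1.edges := by
    simp [c1, Walk.edges_concat]
  have hin2 := key.mp hin1
  simp only [c2, Walk.edges_cons, Walk.edges_concat, List.concat_eq_append, List.mem_cons,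
    List.mem_append, List.mem_singleton] at hin2
  rcases hin2 with h | h | h
  · rw [Sym2.eq_iff] at h
    rcases h with ⟨h1, h2⟩ | ⟨h1, h2⟩ <;> simp_all
  · exact hqx (qq.snd_mem_support_of_mem_edges h)
  · rw [Sym2.eq_iff] at h
    rcases h with ⟨h1, h2⟩ | ⟨h1, h2⟩ <;> simp_all

lemma key_lemma
    (hG2 : ∀ (a b : Fin n) (p : G.Walk a a) (q : G.Walk b b), p.IsCycle → q.IsCycle →
      ∀ e ∈ p.edges, e ∈ q.edges → ∀ e', (e' ∈ p.edges ↔ e' ∈ q.edges)) :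
    ∀ (N : ℕ) (s : Finset (Fin n)), s.card = N → 3 ≤ s.card →
    (∀ a ∈ s, ∀ b ∈ s, ∃ p : G.Walk a b, ∀ z ∈ p.support, z ∈ s) →
    ∃ l : List (Fin n), l.Nodup ∧ l.toFinset = s ∧
      (∀ (h : 2 < l.length), G.Adj (l[0]'(by omega)) (l[1]'(by omega)) ∧
        G.Adj (l[1]'(by omega)) (l[2]'(by omega))) ∧
      (∀ (i : ℕ) (hi : i < l.length), 3 ≤ i →
        ((l.take i).filter (fun y => G.Adj (l[i]'hi) y)).length ≤ 2) := by
  classical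
  intro N
  induction N using Nat.strong_induction_on with
  | _ N ih =>
    intro s hcard h3 hconn
    rcases eq_or_lt_of_le h3 with hN3 | hN4
    · -- base case : |s| = 3
      obtain ⟨a, b, c, hab, hac, hbc, hs⟩ := Finset.card_eq_three.mp hN3.symm
      subst hs
      -- each vertex has a neighbor in s
      have hnbr : ∀ z ∈ ({a, b, c} : Finset (Fin n)), ∀ t ∈ ({a, b, c} : Finset (Fin n)),
          z ≠ t → ∃ y ∈ ({a, b, c} : Finset (Fin n)), G.Adj z y := by
        intro z hz t ht hzt
        obtain ⟨p, hp⟩ := hconn z hz t ht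
        cases p with
        | nil => exact absurd rfl hzt
        | cons h q =>
          exact ⟨_, hp _ (by simp [Walk.support_cons]), h⟩
      have hmem : ∀ z : Fin n, z ∈ ({a, b, c} : Finset (Fin n)) ↔ z = a ∨ z = b ∨ z = c := by
        intro z; simp
      -- produce the list by case analysis on which edges exist
      have build : ∀ x y z : Fin n, x ≠ y → x ≠ z → y ≠ z →
          ({x, y, z} : Finset (Fin n)) = {a, b, c} → G.Adj x y → G.Adj y z →
          ∃ l : List (Fin n), l.Nodup ∧ l.toFinset = ({a, b, c} : Finset (Fin n)) ∧
          (∀ (h : 2 < l.length), G.Adj (l[0]'(by omega)) (l[1]'(by omega)) ∧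
            G.Adj (l[1]'(by omega)) (l[2]'(by omega))) ∧
          (∀ (i : ℕ) (hi : i < l.length), 3 ≤ i →
            ((l.take i).filter (fun y => G.Adj (l[i]'hi) y)).length ≤ 2) := by
        intro x y z hxy hxz hyz hset hABxy hAByz
        refine ⟨[x, y, z], by simp [hxy, hxz, hyz], by simpa using hset, fun _ => ⟨hABxy, hAByz⟩,
          ?_⟩
        intro i hi h3i
        simp only [List.length_cons, List.length_nil] at hi
        omega
      by_cases hAB : G.Adj a b
      · by_cases hAC : G.Adj a c
        · exact build b a c (Ne.symm hab) hbc hac (Finset.insert_comm b a {c}) hAB.symm hAC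
        · by_cases hBC : G.Adj b c
          · exact build a b c hab hac hbc rfl hAB hBC
          · -- c has no neighbor: contradiction
            obtain ⟨y, hy, hadj⟩ := hnbr c (by simp) a (by simp) (Ne.symm hac)
            rcases (hmem y).mp hy with rfl | rfl | rfl
            · exact (hAC hadj.symm).elim
            · exact (hBC hadj.symm).elim
            · exact (G.irrefl hadj).elim
      · by_cases hAC : G.Adj a c
        · by_cases hBC : G.Adj b c
          · exact build a c b hac hab (Ne.symm hbc)
              (by rw [Finset.pair_comm c b]) hAC hBC.symm
          · obtain ⟨y, hy, hadj⟩ := hnbr b (by simp) a (by simp) (Ne.symm hab)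
            rcases (hmem y).mp hy with rfl | rfl | rfl
            · exact (hAB hadj.symm).elim
            · exact (G.irrefl hadj).elim
            · exact (hBC hadj).elim
        · obtain ⟨y, hy, hadj⟩ := hnbr a (by simp) b (by simp) hab
          rcases (hmem y).mp hy with rfl | rfl | rfl
          · exact (G.irrefl hadj).elim
          · exact (hAB hadj).elim
          · exact (hAC hadj).elim
    · -- inductive step : |s| ≥ 4
      have hrne : s.Nonempty := Finset.card_pos.mp (by omega)
      obtain ⟨r, hr⟩ := hrne
      have hQ : ∀ y ∈ s, ∃ k, ∃ p : G.Walk r y, (∀ z ∈ p.support, z ∈ s) ∧ p.length = k := by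
        intro y hy
        obtain ⟨p, hp⟩ := hconn r hr y hy
        exact ⟨p.length, p, hp, rfl⟩
      set d : Fin n → ℕ := fun y =>
        if h : ∃ k, ∃ p : G.Walk r y, (∀ z ∈ p.support, z ∈ s) ∧ p.length = k then Nat.find h
        else 0 with hd
      have hdspec : ∀ y ∈ s, ∃ p : G.Walk r y, (∀ z ∈ p.support, z ∈ s) ∧ p.length = d y := by
        intro y hy
        have h := hQ y hy
        rw [hd]; simp only [dif_pos h]
        exact Nat.find_spec h
      have hdmin : ∀ (y : Fin n) (p : G.Walk r y), (∀ z ∈ p.support, z ∈ s) → d y ≤ p.length := by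
        intro y p hp
        have h : ∃ k, ∃ p : G.Walk r y, (∀ z ∈ p.support, z ∈ s) ∧ p.length = k :=
          ⟨p.length, p, hp, rfl⟩
        rw [hd]; simp only [dif_pos h]
        exact Nat.find_min' h ⟨p, hp, rfl⟩
      obtain ⟨x, hx, hmax⟩ := Finset.exists_max_image s d ⟨r, hr⟩
      have hdr : d r = 0 :=
        Nat.le_zero.mp ((hdmin r Walk.nil (by simpa using hr)).trans (by simp))
      have hxr : x ≠ r := by
        obtain ⟨y, hy, hyr⟩ := Finset.exists_mem_ne (s := s) (by omega) r
        have h1 : 1 ≤ d y := by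
          rcases Nat.eq_zero_or_pos (d y) with h0 | h
          · obtain ⟨p, _, hlen⟩ := hdspec y hy
            exact absurd (Walk.eq_of_length_eq_zero (hlen.trans h0)) (Ne.symm hyr)
          · exact h
        intro h
        have h2 := hmax y hy
        rw [h, hdr] at h2
        omega
      have havoid : ∀ a ∈ s, a ≠ x → ∃ p : G.Walk r a, (∀ z ∈ p.support, z ∈ s) ∧
          x ∉ p.support := by
        intro a ha hax
        obtain ⟨p, hps, hplen⟩ := hdspec a ha
        by_cases hxp : x ∈ p.support
        · exfalso
          have h1 : d x ≤ (p.takeUntil x hxp).length :=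
            hdmin x _ (fun z hz => hps z (p.support_takeUntil_subset hxp hz))
          have h2 : (p.dropUntil x hxp).length ≠ 0 := fun h0 =>
            hax (Walk.eq_of_length_eq_zero h0).symm
          have h3 : (p.takeUntil x hxp).length + (p.dropUntil x hxp).length = p.length := by
            rw [← Walk.length_append, p.take_spec hxp]
          have h4 := hmax a ha
          omega
        · exact ⟨p, hps, hxp⟩
      set s' := s.erase x with hs'
      have hxs' : x ∉ s' := Finset.notMem_erase x s
      have hconn' : ∀ a ∈ s', ∀ b ∈ s', ∃ p : G.Walk a b, ∀ z ∈ p.support, z ∈ s' := by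
        intro a ha b hb
        obtain ⟨pa, hpas, hpax⟩ := havoid a (Finset.mem_of_mem_erase ha)
          (Finset.ne_of_mem_erase ha)
        obtain ⟨pb, hpbs, hpbx⟩ := havoid b (Finset.mem_of_mem_erase hb)
          (Finset.ne_of_mem_erase hb)
        refine ⟨pa.reverse.append pb, ?_⟩
        intro z hz
        rw [Walk.mem_support_append_iff] at hz
        rcases hz with hz | hz
        · rw [Walk.support_reverse, List.mem_reverse] at hz
          exact Finset.mem_erase.mpr ⟨fun he => hpax (he ▸ hz), hpas z hz⟩
        · exact Finset.mem_erase.mpr ⟨fun he => hpbx (he ▸ hz), hpbs z hz⟩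
      have hcard' : s'.card = N - 1 := by rw [hs', Finset.card_erase_of_mem hx, hcard]
      obtain ⟨l', hnd', hfin', hpath', hdeg'⟩ :=
        ih (N - 1) (by omega) s' hcard' (by rw [hcard']; omega) hconn'
      have hlen' : l'.length = N - 1 := by
        rw [← List.toFinset_card_of_nodup hnd', hfin', hcard']
      have hxl' : x ∉ l' := fun h => hxs' (by rw [← hfin']; exact List.mem_toFinset.mpr h)
      refine ⟨l' ++ [x], ?_, ?_, ?_, ?_⟩
      · rw [List.nodup_append]
        refine ⟨hnd', List.nodup_singleton x, ?_⟩
        intro a ha b hb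
        rw [List.mem_singleton] at hb
        exact fun hab => hxl' (hb ▸ hab ▸ ha)
      · rw [List.toFinset_append, List.toFinset_cons, List.toFinset_nil]
        rw [Finset.union_comm, hfin']
        simpa using Finset.insert_erase hx
      · intro h
        have h2 : 2 < l'.length := by omega
        have := hpath' h2
        rw [List.getElem_append_left (by omega), List.getElem_append_left (by omega),
          List.getElem_append_left h2]
        exact this
      · intro i hi h3i
        rw [List.length_append, List.length_cons, List.length_nil] at hi
        rcases lt_or_eq_of_le (Nat.lt_succ_iff.mp hi) with hilt | hieq
        · rw [List.take_append_of_le_length (le_of_lt hilt)]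
          rw [List.getElem_append_left hilt]
          exact hdeg' i hilt h3i
        · subst hieq
          rw [List.take_left]
          rw [List.getElem_concat_length (l := l') (a := x) (i := l'.length) rfl]
          by_contra hcon
          push_neg at hcon
          have hlenf : 3 ≤ (l'.filter (fun y => G.Adj x y)).length := hcon
          have hndf : (l'.filter (fun y => G.Adj x y)).Nodup := hnd'.filter _
          rcases hff : l'.filter (fun y => G.Adj x y) with _ | ⟨u, _ | ⟨v, _ | ⟨w, t⟩⟩⟩ <;>
            rw [hff] at hlenf hndf <;> simp at hlenf
          have hmemf : ∀ z ∈ u :: v :: w :: t, G.Adj x z ∧ z ∈ s' := by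
            intro z hz
            rw [← hff] at hz
            have h1 := List.of_mem_filter hz
            have h2 := List.mem_of_mem_filter hz
            exact ⟨by simpa using h1, by rw [← hfin']; exact List.mem_toFinset.mpr h2⟩
          obtain ⟨hxu, hus⟩ := hmemf u (by simp)
          obtain ⟨hxv, hvs⟩ := hmemf v (by simp)
          obtain ⟨hxw, hws⟩ := hmemf w (by simp)
          simp only [List.nodup_cons, List.mem_cons] at hndf
          have huv : u ≠ v := fun h => hndf.1 (Or.inl h)
          have huw : u ≠ w := fun h => hndf.1 (Or.inr (Or.inl h))
          have hvw : v ≠ w := fun h => hndf.2.1 (Or.inl h)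
          obtain ⟨p, hps⟩ := hconn' u hus v hvs
          obtain ⟨q, hqs⟩ := hconn' u hus w hws
          exact (cactus_no_three hG2 huv huw hvw hxu hxv hxw p
            (fun h => hxs' (hps x h)) q (fun h => hxs' (hqs x h))).elim

end Aux

/-- The vertices of a cactus graph `G` with `|G| ≥ 5` can be ordered so that the
first three vertices form a path in `G` and every later vertex is adjacent in `G`
to at most two of the prior vertices. -/
theorem cactus_constructedFromPath {n : ℕ} (hn : 5 ≤ n)
    (G : SimpleGraph (Fin n)) [DecidableRel G.Adj] (hG : IsCactus G) :
    ∃ v : Equiv.Perm (Fin n), ConstructedFromPathOrder hn G v := by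
  classical
  obtain ⟨hconn0, hG2⟩ := hG
  have hcardu : (Finset.univ : Finset (Fin n)).card = n := by simp
  obtain ⟨l, hnd, hfin, hpath, hdeg⟩ := key_lemma hG2 n Finset.univ hcardu
    (by omega) (fun a _ b _ => ((hconn0.preconnected a b).elim
      (fun p => ⟨p, fun z _ => Finset.mem_univ z⟩)))
  have hlen : l.length = n := by
    rw [← List.toFinset_card_of_nodup hnd, hfin, hcardu]
  have hlt : ∀ i : Fin n, (i : ℕ) < l.length := fun i => by omega
  let f : Fin n → Fin n := fun i => l[(i : ℕ)]'(hlt i)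
  have hinj : Function.Injective f := by
    intro i j h
    have := (hnd.getElem_inj_iff (hi := hlt i) (hj := hlt j)).mp h
    exact Fin.ext this
  let v : Equiv.Perm (Fin n) := Equiv.ofBijective f (Finite.injective_iff_bijective.mp hinj)
  have hv : ∀ i : Fin n, v i = l[(i : ℕ)]'(hlt i) := fun i => rfl
  have h2lt : 2 < l.length := by omega
  refine ⟨v, ?_, ?_, ?_⟩
  · rw [hv, hv]
    exact (hpath h2lt).1
  · rw [hv, hv]
    exact (hpath h2lt).2
  · intro i h3i
    have hfilter := hdeg (i : ℕ) (hlt i) h3i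
    set fl := (l.take (i : ℕ)).filter (fun y => G.Adj (l[(i : ℕ)]'(hlt i)) y) with hfl
    have hndfl : fl.Nodup :=
      ((List.filter_sublist).trans (List.take_sublist _ _)).nodup hnd
    have hcardfl : fl.toFinset.card = fl.length := List.toFinset_card_of_nodup hndfl
    have hsub : ∀ j ∈ Finset.univ.filter (fun j : Fin n => j < i ∧ G.Adj (v i) (v j)),
        v j ∈ fl.toFinset := by
      intro j hj
      rw [Finset.mem_filter] at hj
      obtain ⟨_, hji, hadj⟩ := hj
      rw [List.mem_toFinset, hfl, List.mem_filter]
      constructor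
      · have hji' : (j : ℕ) < (i : ℕ) := hji
        have := List.getElem_take' (hlt j) hji'
        rw [hv, this]
        exact List.getElem_mem _
      · simpa [hv i] using hadj
    calc (Finset.univ.filter (fun j : Fin n => j < i ∧ G.Adj (v i) (v j))).card
        ≤ fl.toFinset.card := Finset.card_le_card_of_injOn (fun j => v j) hsub
          (v.injective.injOn)
      _ = fl.length := hcardfl
      _ ≤ 2 := by rw [hfl]; exact hfilter
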